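/- For all real α > -1/2, the sum ∑_{r=0}^∞ C(α,r) (-1)^r / (2r+1+m) equals (1/2)·Γ(α+1)Γ(m/2+1/2)/Γ(α+3/2+m/2), for every real m > -1, where C(α,r) = (1/r!)·∏_{j=0}^{r-1}(α-j) is the generalized binomial coefficient. -/

import Mathlib

/-- Generalized binomial coefficient `C(α,r) = (1/r!)·∏_{j<r}(α-j)`. -/
noncomputable def genBinom (α : ℝ) (r : ℕ) : ℝ :=
  (∏ j ∈ Finset.range r, (α - j)) / (Nat.factorial r)

lemma genBinom_zero (α : ℝ) : genBinom α 0 = 1 := by simp [genBinom]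

lemma genBinom_succ (α : ℝ) (r : ℕ) :
    genBinom α (r + 1) * (r + 1) = genBinom α r * (α - r) := by
  have h1 : (Nat.factorial r : ℝ) ≠ 0 := Nat.cast_ne_zero.mpr r.factorial_ne_zero
  have h2 : ((r:ℝ) + 1) ≠ 0 := by positivity
  simp only [genBinom, Finset.prod_range_succ, Nat.factorial_succ]
  push_cast
  field_simp

/-- key inequality: (k-α)√(k+2) ≤ (k+1)√(k+1) for 0 ≤ k, α ≤ k, α > -1/2 -/
lemma key_ineq {α : ℝ} (hα : α > -1/2) (k : ℝ) (hk : 0 ≤ k) (hak : α ≤ k) :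
    (k - α) * Real.sqrt (k + 2) ≤ (k + 1) * Real.sqrt (k + 1) := by
  have h1 : (k - α) * Real.sqrt (k + 2) = Real.sqrt ((k - α)^2 * (k + 2)) := by
    rw [Real.sqrt_mul (by positivity), Real.sqrt_sq (by linarith)]
  have h2 : (k + 1) * Real.sqrt (k + 1) = Real.sqrt ((k + 1)^2 * (k + 1)) := by
    rw [Real.sqrt_mul (by positivity), Real.sqrt_sq (by linarith)]
  rw [h1, h2]
  apply Real.sqrt_le_sqrt
  have h3 : (k - α)^2 ≤ (k + 1/2)^2 := by nlinarith
  nlinarith [h3]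

lemma genBinom_decay {α : ℝ} (hα : α > -1/2) :
    ∃ B : ℝ, 0 < B ∧ ∀ r : ℕ, |genBinom α r| * Real.sqrt (r + 1) ≤ B := by
  set r0 := ⌈α⌉₊ with hr0
  have hle : (α : ℝ) ≤ r0 := Nat.le_ceil α
  have main : ∀ n : ℕ, |genBinom α (r0 + n)| * Real.sqrt (r0 + n + 1)
      ≤ |genBinom α r0| * Real.sqrt (r0 + 1) := by
    intro n
    induction n with
    | zero => simp
    | succ n ih =>
      set k := r0 + n with hk
      have hαk : α ≤ (k : ℝ) := le_trans hle (by exact_mod_cast Nat.le_add_right r0 n)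
      have hrec : genBinom α (k + 1) * (k + 1) = genBinom α k * (α - k) := genBinom_succ α k
      have hk1 : ((k:ℝ) + 1) > 0 := by positivity
      have habs : |genBinom α (k + 1)| = |genBinom α k| * ((k : ℝ) - α) / ((k:ℝ) + 1) := by
        have : genBinom α (k + 1) = genBinom α k * (α - k) / ((k:ℝ) + 1) := by
          field_simp at hrec ⊢; linarith [hrec]
        rw [this, abs_div, abs_mul, abs_of_pos hk1, abs_of_nonpos (by linarith : α - (k:ℝ) ≤ 0)]
        ring_nf
      have key := key_ineq hα (k : ℝ) (by positivity) hαk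
      have step : |genBinom α (k + 1)| * Real.sqrt ((k:ℝ) + 1 + 1)
          ≤ |genBinom α k| * Real.sqrt ((k:ℝ) + 1) := by
        rw [habs]
        rw [div_mul_eq_mul_div, div_le_iff₀ hk1]
        have hb : (0:ℝ) ≤ |genBinom α k| := abs_nonneg _
        calc |genBinom α k| * ((k:ℝ) - α) * Real.sqrt ((k:ℝ) + 1 + 1)
            = |genBinom α k| * (((k:ℝ) - α) * Real.sqrt ((k:ℝ) + 2)) := by ring_nf
          _ ≤ |genBinom α k| * (((k:ℝ) + 1) * Real.sqrt ((k:ℝ) + 1)) :=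
              mul_le_mul_of_nonneg_left key hb
          _ = |genBinom α k| * Real.sqrt ((k:ℝ) + 1) * ((k:ℝ) + 1) := by ring
      calc |genBinom α (r0 + (n+1))| * Real.sqrt ((r0:ℝ) + ((n:ℕ)+1:ℕ) + 1)
          = |genBinom α (k + 1)| * Real.sqrt ((k:ℝ) + 1 + 1) := by
            rw [hk]; push_cast; ring_nf
        _ ≤ |genBinom α k| * Real.sqrt ((k:ℝ) + 1) := step
        _ ≤ |genBinom α r0| * Real.sqrt (r0 + 1) := by
            have heq : ((k:ℕ):ℝ) + 1 = (r0:ℝ) + (n:ℝ) + 1 := by rw [hk]; push_cast; ring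
            rw [heq]; exact ih
  -- combine with finitely many small indices
  obtain ⟨B0, hB0⟩ : ∃ B0, ∀ r ∈ Finset.range (r0 + 1),
      |genBinom α r| * Real.sqrt (r + 1) ≤ B0 :=
    ⟨(Finset.range (r0+1)).sup' ⟨0, by simp⟩ (fun r => |genBinom α r| * Real.sqrt (r + 1)),
      fun r hr => Finset.le_sup' (fun r : ℕ => |genBinom α r| * Real.sqrt (r + 1)) hr⟩
  refine ⟨max B0 1, lt_of_lt_of_le one_pos (le_max_right _ _), fun r => ?_⟩
  rcases le_or_gt r r0 with h | h
  · exact le_trans (hB0 r (Finset.mem_range.mpr (by omega))) (le_max_left _ _)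
  · obtain ⟨n, rfl⟩ : ∃ n, r = r0 + n := ⟨r - r0, by omega⟩
    have hcast : ((r0 + n : ℕ) : ℝ) + 1 = (r0:ℝ) + (n:ℝ) + 1 := by push_cast; ring
    rw [hcast]
    refine le_trans (main n) (le_trans ?_ (le_max_left _ _))
    exact hB0 r0 (Finset.mem_range.mpr (by omega))

lemma genBinom_bounded {α : ℝ} (hα : α > -1/2) :
    ∃ B : ℝ, 0 < B ∧ ∀ r : ℕ, |genBinom α r| ≤ B := by
  obtain ⟨B, hB, h⟩ := genBinom_decay hα
  refine ⟨B, hB, fun r => ?_⟩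
  have h1 : (1:ℝ) ≤ Real.sqrt (r + 1) := by
    have : Real.sqrt 1 ≤ Real.sqrt ((r:ℝ) + 1) :=
      Real.sqrt_le_sqrt (by linarith [Nat.cast_nonneg (α := ℝ) r])
    rwa [Real.sqrt_one] at this
  nlinarith [h r, abs_nonneg (genBinom α r), Real.sqrt_nonneg ((r:ℝ)+1)]

section BinomSeries

variable {α : ℝ}

/-- summability of the derivative-bound series -/
lemma summable_aux {ρ : ℝ} (hρ0 : 0 ≤ ρ) (hρ1 : ρ < 1) (B : ℝ) :
    Summable (fun r : ℕ => B * (r * ρ ^ (r - 1))) := by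
  apply Summable.mul_left
  rw [← summable_nat_add_iff 1]
  simp only [Nat.add_sub_cancel]
  have h1 : Summable (fun n : ℕ => (n : ℝ) ^ 1 * ρ ^ n) :=
    summable_pow_mul_geometric_of_norm_lt_one 1 (by rwa [Real.norm_eq_abs, abs_of_nonneg hρ0])
  have h2 : Summable (fun n : ℕ => ρ ^ n) := summable_geometric_of_lt_one hρ0 hρ1
  have := (h1.add h2)
  apply this.congr
  intro n
  push_cast
  ring

lemma summable_g' (hα : α > -1/2) {y : ℝ} (hy : |y| < 1) :
    Summable (fun r : ℕ => genBinom α r * (-1) ^ r * (r * y ^ (r - 1))) := by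
  obtain ⟨B, hB, hb⟩ := genBinom_bounded hα
  apply Summable.of_norm_bounded (summable_aux (abs_nonneg y) hy B)
  intro r
  rw [Real.norm_eq_abs, abs_mul, abs_mul, abs_mul, abs_pow, abs_neg, abs_one, one_pow, mul_one,
    abs_pow]
  rcases Nat.eq_zero_or_pos r with h | h
  · simp [h]
  · rw [Nat.abs_cast]
    have h1 : |y| ^ (r - 1) ≤ |y| ^ (r - 1) := le_refl _
    have : |genBinom α r| * ((r:ℝ) * |y| ^ (r - 1)) ≤ B * ((r:ℝ) * |y| ^ (r - 1)) := by
      apply mul_le_mul_of_nonneg_right (hb r)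
      positivity
    exact le_trans (le_of_eq (by ring)) this

lemma summable_g (hα : α > -1/2) {y : ℝ} (hy : |y| < 1) :
    Summable (fun r : ℕ => genBinom α r * (-1) ^ r * y ^ r) := by
  obtain ⟨B, hB, hb⟩ := genBinom_bounded hα
  apply Summable.of_norm_bounded
    ((summable_geometric_of_lt_one (abs_nonneg y) hy).mul_left B)
  intro r
  rw [Real.norm_eq_abs, abs_mul, abs_mul, abs_pow, abs_neg, abs_one, one_pow, mul_one, abs_pow]
  exact mul_le_mul_of_nonneg_right (hb r) (by positivity)

lemma hasDerivAt_F (hα : α > -1/2) {y : ℝ} (hy : |y| < 1) :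
    HasDerivAt (fun x => ∑' r : ℕ, genBinom α r * (-1) ^ r * x ^ r)
      (∑' r : ℕ, genBinom α r * (-1) ^ r * (r * y ^ (r - 1))) y := by
  obtain ⟨B, hB, hb⟩ := genBinom_bounded hα
  set ρ : ℝ := (|y| + 1) / 2 with hρ
  have hyρ : |y| < ρ := by rw [hρ]; linarith
  have hρ0 : 0 ≤ ρ := le_trans (abs_nonneg y) hyρ.le
  have hρ1 : ρ < 1 := by rw [hρ]; linarith
  have hρpos : 0 < ρ := by rw [hρ]; linarith [abs_nonneg y]
  refine hasDerivAt_tsum_of_isPreconnected (y₀ := 0) (summable_aux hρ0 hρ1 B)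
    (isOpen_Ioo (a := -ρ) (b := ρ)) (isPreconnected_Ioo)
    (fun r z _ => ((hasDerivAt_pow r z).const_mul (genBinom α r * (-1) ^ r)))
    ?_ ?_ ?_ ?_
  · intro r z hz
    have hzρ : |z| ≤ ρ := by
      rw [abs_le]; exact ⟨hz.1.le, hz.2.le⟩
    rw [Real.norm_eq_abs, abs_mul, abs_mul, abs_mul, abs_pow, abs_neg, abs_one, one_pow, mul_one,
      Nat.abs_cast, abs_pow]
    have h2 : |z| ^ (r - 1) ≤ ρ ^ (r - 1) := pow_le_pow_left₀ (abs_nonneg z) hzρ _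
    have : |genBinom α r| * ((r:ℝ) * |z| ^ (r - 1)) ≤ B * ((r:ℝ) * ρ ^ (r - 1)) := by
      apply mul_le_mul (hb r) (by apply mul_le_mul_of_nonneg_left h2 (by positivity))
        (by positivity) hB.le
    exact le_trans (le_of_eq (by ring)) this
  · exact ⟨by linarith, by linarith⟩
  · apply summable_of_ne_finset_zero (s := {0})
    intro r hr
    simp only [Finset.mem_singleton] at hr
    simp [zero_pow hr]
  · rw [Set.mem_Ioo, ← abs_lt]; exact hyρ

end BinomSeries

lemma ode_identity {α : ℝ} (hα : α > -1/2) {y : ℝ} (hy : |y| < 1) :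
    (1 - y) * (∑' r : ℕ, genBinom α r * (-1) ^ r * (r * y ^ (r - 1)))
      + α * (∑' r : ℕ, genBinom α r * (-1) ^ r * y ^ r) = 0 := by
  have hs' := summable_g' hα hy
  have hs := summable_g hα hy
  set g' : ℕ → ℝ := fun r => genBinom α r * (-1) ^ r * (r * y ^ (r - 1)) with hg'
  set g : ℕ → ℝ := fun r => genBinom α r * (-1) ^ r * y ^ r with hg
  have hshift : Summable (fun r : ℕ => g' (r + 1)) := by
    rw [summable_nat_add_iff]; exact hs'
  have hA : ∑' r, g' r = ∑' r, g' (r + 1) := by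
    rw [Summable.tsum_eq_zero_add hs']
    simp [hg']
  -- per-term identity
  have hterm : ∀ r : ℕ, (1 - y) * g' (r + 1) + α * g r = y * g' r - y * g' (r + 1) := by
    intro r
    have hrec : genBinom α (r + 1) * ((r : ℝ) + 1) = genBinom α r * (α - r) := genBinom_succ α r
    rcases Nat.eq_zero_or_pos r with rfl | hr
    · simp only [hg', hg]
      push_cast
      linear_combination (-1 : ℝ) * hrec
    · have hyr : y ^ r = y ^ (r - 1) * y := by
        rw [← pow_succ]; congr 1; omega
      simp only [hg', hg, Nat.add_sub_cancel]
      rw [hyr]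
      push_cast
      have hodd : (-1 : ℝ) ^ (r + 1) = -(-1 : ℝ) ^ r := by rw [pow_succ]; ring
      rw [hodd]
      linear_combination (-((-1:ℝ)^r) * (y ^ (r-1) * y)) * hrec
  calc (1 - y) * ∑' r, g' r + α * ∑' r, g r
      = (1 - y) * ∑' r, g' (r + 1) + α * ∑' r, g r := by rw [hA]
    _ = (∑' r, (1 - y) * g' (r + 1)) + ∑' r, α * g r := by rw [tsum_mul_left, tsum_mul_left]
    _ = ∑' r, ((1 - y) * g' (r + 1) + α * g r) :=
        (Summable.tsum_add (hshift.mul_left (1 - y)) (hs.mul_left α)).symm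
    _ = ∑' r, (y * g' r - y * g' (r + 1)) := tsum_congr hterm
    _ = (∑' r, y * g' r) - ∑' r, y * g' (r + 1) :=
        Summable.tsum_sub (hs'.mul_left y) (hshift.mul_left y)
    _ = y * (∑' r, g' r) - y * ∑' r, g' (r + 1) := by rw [tsum_mul_left, tsum_mul_left]
    _ = 0 := by rw [← hA]; ring

lemma binom_tsum {α : ℝ} (hα : α > -1/2) {x : ℝ} (hx : x ∈ Set.Ioo (0:ℝ) 1) :
    ∑' r : ℕ, genBinom α r * (-1) ^ r * x ^ r = (1 - x) ^ α := by
  set F : ℝ → ℝ := fun z => ∑' r : ℕ, genBinom α r * (-1) ^ r * z ^ r with hF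
  set H : ℝ → ℝ := fun z => F z * (1 - z) ^ (-α) with hH
  have key : ∀ y ∈ Set.Ioo (-1:ℝ) 1, HasDerivAt H 0 y := by
    intro y hy
    have hy' : |y| < 1 := abs_lt.mpr ⟨hy.1, hy.2⟩
    have h1y : (0:ℝ) < 1 - y := by linarith [hy.2]
    have hdF := hasDerivAt_F hα hy'
    have hc : HasDerivAt (fun z : ℝ => 1 - z) (-1) y := (hasDerivAt_id y).const_sub 1
    have hR : HasDerivAt (fun z : ℝ => (1 - z) ^ (-α)) (α * (1 - y) ^ (-α - 1)) y := by
      have h2 := (Real.hasDerivAt_rpow_const (x := 1 - y) (p := -α) (Or.inl h1y.ne')).comp y hc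
      simp only [Function.comp_def] at h2
      refine h2.congr_deriv ?_
      ring
    have hmul := hdF.mul hR
    have hode := ode_identity hα hy'
    have hre : (1 - y) ^ (-α) = (1 - y) ^ (-α - 1) * (1 - y) := by
      rw [← Real.rpow_add_one h1y.ne' (-α - 1)]
      ring_nf
    refine hmul.congr_deriv (Eq.symm ?_)
    rw [hre]
    linear_combination (-(1 - y) ^ (-α - 1)) * hode
  have hsub : Set.Icc (0:ℝ) x ⊆ Set.Ioo (-1:ℝ) 1 := fun y hy =>
    ⟨by linarith [hy.1], by linarith [hy.2, hx.2]⟩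
  have cont : ContinuousOn H (Set.Icc 0 x) := fun y hy =>
    ((key y (hsub hy)).continuousAt).continuousWithinAt
  obtain ⟨c, _, hceq⟩ := exists_hasDerivAt_eq_slope H (fun _ => 0) hx.1 cont
    (fun y hy => key y (hsub ⟨hy.1.le, hy.2.le⟩))
  have hH0 : H 0 = 1 := by
    have hF0 : F 0 = 1 := by
      have h3 : F 0 = ∑' r : ℕ, genBinom α r * (-1) ^ r * (0:ℝ) ^ r := rfl
      rw [h3, tsum_eq_single 0 (fun b hb => by simp [zero_pow hb])]
      simp [genBinom]
    simp [hH, hF0]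
  have hHx : H x = 1 := by
    have hx0 : x - 0 ≠ 0 := by simpa using hx.1.ne'
    have h2 : H x - H 0 = 0 := by
      have h4 := hceq.symm
      rwa [div_eq_zero_iff, or_iff_left hx0] at h4
    rw [hH0] at h2
    linarith
  have h1x : (0:ℝ) < 1 - x := by linarith [hx.2]
  have hne : (1 - x) ^ α ≠ 0 := (Real.rpow_pos_of_pos h1x α).ne'
  have : F x * ((1 - x) ^ α)⁻¹ = 1 := by
    rw [← Real.rpow_neg h1x.le]; exact hHx
  field_simp at this
  exact this

/-- Real Beta integral formula. -/
lemma real_beta {u v : ℝ} (hu : 0 < u) (hv : 0 < v) :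
    ∫ x in (0:ℝ)..1, x ^ (u - 1) * (1 - x) ^ (v - 1)
      = Real.Gamma u * Real.Gamma v / Real.Gamma (u + v) := by
  have hgc := Complex.Gamma_mul_Gamma_eq_betaIntegral (s := (u:ℂ)) (t := (v:ℂ))
    (by simpa using hu) (by simpa using hv)
  have hBeta : Complex.betaIntegral u v
      = ((∫ x in (0:ℝ)..1, x ^ (u - 1) * (1 - x) ^ (v - 1) : ℝ) : ℂ) := by
    rw [Complex.betaIntegral]
    rw [← intervalIntegral.integral_ofReal]
    apply intervalIntegral.integral_congr
    intro x hx
    rw [Set.uIcc_of_le zero_le_one] at hx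
    have hx0 : (0:ℝ) ≤ x := hx.1
    have hx1 : (0:ℝ) ≤ 1 - x := by linarith [hx.2]
    beta_reduce
    rw [show ((u:ℂ) - 1) = ((u - 1 : ℝ) : ℂ) by push_cast; ring,
        show ((v:ℂ) - 1) = ((v - 1 : ℝ) : ℂ) by push_cast; ring,
        show ((1:ℂ) - (x:ℂ)) = ((1 - x : ℝ) : ℂ) by push_cast; ring,
        ← Complex.ofReal_cpow hx0, ← Complex.ofReal_cpow hx1]
    norm_cast
  have hne : Real.Gamma (u + v) ≠ 0 := (Real.Gamma_pos_of_pos (by linarith)).ne'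
  have h2 : Complex.Gamma (u + v) ≠ 0 := by
    rw [show ((u:ℂ) + v) = ((u + v : ℝ) : ℂ) by push_cast; ring, Complex.Gamma_ofReal]
    exact_mod_cast hne
  have h3 : (Complex.Gamma u * Complex.Gamma v) / Complex.Gamma (u + v)
      = Complex.betaIntegral u v := by
    rw [hgc]; field_simp
  rw [hBeta] at h3
  have h4 : ((Real.Gamma u * Real.Gamma v / Real.Gamma (u + v) : ℝ) : ℂ)
      = ((∫ x in (0:ℝ)..1, x ^ (u - 1) * (1 - x) ^ (v - 1) : ℝ) : ℂ) := by
    rw [← h3, Complex.ofReal_div, Complex.ofReal_mul, ← Complex.Gamma_ofReal u,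
      ← Complex.Gamma_ofReal v, ← Complex.Gamma_ofReal (u + v), Complex.ofReal_add]
  exact_mod_cast h4.symm

/-- integral of x^q on (0,1) -/
lemma integral_rpow01 {q : ℝ} (hq : -1 < q) :
    ∫ x in Set.Ioo (0:ℝ) 1, x ^ q = 1 / (q + 1) := by
  rw [← MeasureTheory.integral_Ioc_eq_integral_Ioo,
    ← intervalIntegral.integral_of_le zero_le_one, integral_rpow (Or.inl hq),
    Real.one_rpow, Real.zero_rpow (by linarith)]
  ring

lemma integrableOn_rpow01 {q : ℝ} (hq : -1 < q) :
    MeasureTheory.IntegrableOn (fun x : ℝ => x ^ q) (Set.Ioo 0 1) := by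
  have := intervalIntegral.intervalIntegrable_rpow' (a := 0) (b := 1) hq
  rw [intervalIntegrable_iff_integrableOn_Ioc_of_le zero_le_one] at this
  exact this.mono_set Set.Ioo_subset_Ioc_self

lemma summable_three_halves : Summable (fun r : ℕ => (((r:ℝ) + 1) * Real.sqrt ((r:ℝ) + 1))⁻¹) := by
  have h1 : Summable (fun n : ℕ => ((n:ℝ) ^ ((3:ℝ)/2))⁻¹) :=
    Real.summable_nat_rpow_inv.mpr (by norm_num)
  have h2 := (summable_nat_add_iff 1).mpr h1
  apply h2.congr
  intro n
  have hn : (0:ℝ) < (n:ℝ) + 1 := by positivity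
  have : ((n:ℝ) + 1) ^ ((3:ℝ)/2) = ((n:ℝ) + 1) * Real.sqrt ((n:ℝ) + 1) := by
    rw [show (3:ℝ)/2 = 1 + 1/2 by norm_num, Real.rpow_add hn, Real.rpow_one,
      Real.sqrt_eq_rpow]
  rw [← this]
  push_cast
  norm_num

theorem stmt0 (α : ℝ) (hα : α > -1/2) (m : ℝ) (hm : m > -1) :
    ∑' r : ℕ, genBinom α r * (-1) ^ r / (2 * r + 1 + m) =
      (1 / 2) * Real.Gamma (α + 1) * Real.Gamma (m / 2 + 1 / 2) /
        Real.Gamma (α + 3 / 2 + m / 2) := by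
  obtain ⟨B, hB, hBd⟩ := genBinom_decay hα
  set c : ℕ → ℝ := fun r => genBinom α r * (-1) ^ r with hc
  set q : ℕ → ℝ := fun r => (m - 1) / 2 + r with hqdef
  have hq : ∀ r : ℕ, -1 < q r := by
    intro r
    have : (0:ℝ) ≤ r := Nat.cast_nonneg r
    simp only [hqdef]; linarith
  have hq1 : ∀ r : ℕ, 0 < q r + 1 := fun r => by linarith [hq r]
  set F : ℕ → ℝ → ℝ := fun r x => c r * x ^ (q r) with hFdef
  have hint : ∀ r : ℕ, MeasureTheory.IntegrableOn (F r) (Set.Ioo 0 1) :=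
    fun r => (integrableOn_rpow01 (hq r)).const_mul (c r)
  have hnormint : ∀ r : ℕ, ∫ x in Set.Ioo (0:ℝ) 1, ‖F r x‖ = |c r| * (1 / (q r + 1)) := by
    intro r
    have h1 : ∀ x ∈ Set.Ioo (0:ℝ) 1, ‖F r x‖ = |c r| * x ^ (q r) := by
      intro x hx
      rw [hFdef, Real.norm_eq_abs, abs_mul, abs_of_nonneg (Real.rpow_nonneg hx.1.le _)]
    rw [MeasureTheory.setIntegral_congr_fun measurableSet_Ioo h1,
      MeasureTheory.integral_const_mul, integral_rpow01 (hq r)]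
  have hsummable : Summable (fun r : ℕ => |c r| * (1 / (q r + 1))) := by
    set cm : ℝ := min 2 (1 + m) with hcm
    have hcm0 : 0 < cm := lt_min two_pos (by linarith)
    apply Summable.of_nonneg_of_le (fun r => mul_nonneg (abs_nonneg _) (one_div_pos.mpr (hq1 r)).le)
      (f := fun r : ℕ => (2 * B / cm) * (((r:ℝ) + 1) * Real.sqrt ((r:ℝ) + 1))⁻¹)
      ?_ (summable_three_halves.mul_left _)
    intro r
    have hs : (0:ℝ) < Real.sqrt ((r:ℝ) + 1) := Real.sqrt_pos.mpr (by positivity)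
    have h1 : |c r| ≤ B / Real.sqrt ((r:ℝ) + 1) := by
      rw [le_div_iff₀ hs]
      have := hBd r
      simpa [hc, abs_mul] using this
    have h2 : (1:ℝ) / (q r + 1) ≤ 2 / (cm * ((r:ℝ) + 1)) := by
      rw [div_le_div_iff₀ (hq1 r) (mul_pos hcm0 (by positivity))]
      have hcm2 : cm ≤ 2 := min_le_left _ _
      have hcmm : cm ≤ 1 + m := min_le_right _ _
      have hr0 : (0:ℝ) ≤ r := Nat.cast_nonneg r
      simp only [hqdef]
      nlinarith
    calc |c r| * (1 / (q r + 1)) ≤ (B / Real.sqrt ((r:ℝ) + 1)) * (2 / (cm * ((r:ℝ) + 1))) :=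
          mul_le_mul h1 h2 (one_div_pos.mpr (hq1 r)).le (by positivity)
      _ = (2 * B / cm) * (((r:ℝ) + 1) * Real.sqrt ((r:ℝ) + 1))⁻¹ := by
          field_simp
  have hsum := MeasureTheory.hasSum_integral_of_summable_integral_norm
    (μ := MeasureTheory.volume.restrict (Set.Ioo (0:ℝ) 1)) (F := F) hint
    (by simpa only [hnormint] using hsummable)
  have htsum : ∑' r : ℕ, ∫ x in Set.Ioo (0:ℝ) 1, F r x
      = ∫ x in Set.Ioo (0:ℝ) 1, ∑' r : ℕ, F r x := hsum.tsum_eq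
  -- each integral
  have hFint : ∀ r : ℕ, ∫ x in Set.Ioo (0:ℝ) 1, F r x = c r * (1 / (q r + 1)) := by
    intro r
    rw [hFdef]
    simp only
    rw [MeasureTheory.integral_const_mul, integral_rpow01 (hq r)]
  -- pointwise sum
  have hptwise : ∀ x ∈ Set.Ioo (0:ℝ) 1,
      ∑' r : ℕ, F r x = x ^ ((m - 1) / 2) * (1 - x) ^ α := by
    intro x hx
    have hxe : ∀ r : ℕ, F r x = x ^ ((m - 1) / 2) * (c r * x ^ r) := by
      intro r
      rw [hFdef]
      simp only [hqdef]
      rw [Real.rpow_add hx.1, Real.rpow_natCast]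
      ring
    rw [tsum_congr hxe, tsum_mul_left, binom_tsum hα hx]
  have hmain : ∫ x in Set.Ioo (0:ℝ) 1, ∑' r : ℕ, F r x
      = Real.Gamma ((m + 1) / 2) * Real.Gamma (α + 1) / Real.Gamma ((m + 1) / 2 + (α + 1)) := by
    rw [MeasureTheory.setIntegral_congr_fun measurableSet_Ioo hptwise]
    rw [← MeasureTheory.integral_Ioc_eq_integral_Ioo, ← intervalIntegral.integral_of_le zero_le_one]
    rw [← real_beta (by linarith : (0:ℝ) < (m + 1) / 2) (by linarith : (0:ℝ) < α + 1)]
    apply intervalIntegral.integral_congr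
    intro x _
    beta_reduce
    rw [show (m + 1) / 2 - 1 = (m - 1) / 2 by ring, show α + 1 - 1 = α by ring]
  -- put it together
  have hterm : ∀ r : ℕ, genBinom α r * (-1) ^ r / (2 * r + 1 + m)
      = (1 / 2) * (c r * (1 / (q r + 1))) := by
    intro r
    have h2 : (2:ℝ) * r + 1 + m = 2 * (q r + 1) := by simp only [hqdef]; ring
    rw [h2, hc]
    rw [div_eq_mul_inv, mul_inv]
    field_simp
  calc ∑' r : ℕ, genBinom α r * (-1) ^ r / (2 * r + 1 + m)
      = ∑' r : ℕ, (1 / 2) * (c r * (1 / (q r + 1))) := tsum_congr hterm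
    _ = (1 / 2) * ∑' r : ℕ, (c r * (1 / (q r + 1))) := tsum_mul_left
    _ = (1 / 2) * ∑' r : ℕ, ∫ x in Set.Ioo (0:ℝ) 1, F r x := by
        congr 1; exact (tsum_congr hFint).symm
    _ = (1 / 2) * (Real.Gamma ((m + 1) / 2) * Real.Gamma (α + 1)
          / Real.Gamma ((m + 1) / 2 + (α + 1))) := by rw [htsum, hmain]
    _ = (1 / 2) * Real.Gamma (α + 1) * Real.Gamma (m / 2 + 1 / 2) /
        Real.Gamma (α + 3 / 2 + m / 2) := by
        rw [show (m + 1) / 2 = m / 2 + 1 / 2 by ring,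
          show m / 2 + 1 / 2 + (α + 1) = α + 3 / 2 + m / 2 by ring]
        ring
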